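/- Let p be a prime and A ⊆ ℤ/pℤ a finite set with 2 ≤ k ≤ |A| − 2. Then |k∧A| ≥ min{p, |A|}, and if p > 2 then |k∧A| ≥ |A|. -/

import Mathlib

open Finset Pointwise

/-- The set of sums of `k` distinct elements of `A`. -/
def nSum {G : Type*} [AddCommGroup G] [DecidableEq G] (k : ℕ) (A : Finset G) : Finset G :=
  (A.powersetCard k).image fun B => B.sum id

theorem stmt18 (p : ℕ) (hp : p.Prime) (A : Finset (ZMod p)) (k : ℕ)
    (hk2 : 2 ≤ k) (hk : k ≤ A.card - 2) :
    min p A.card ≤ (nSum k A).card ∧ (2 < p → A.card ≤ (nSum k A).card) := by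
  haveI : NeZero p := ⟨hp.ne_zero⟩
  have hA4 : 4 ≤ A.card := by omega
  have hkA : k ≤ A.card := by omega
  have hAp : A.card ≤ p := by
    have := Finset.card_le_univ A
    simpa [ZMod.card] using this
  obtain ⟨B, hBA, hBcard⟩ := Finset.exists_subset_card_eq hkA
  set C : Finset (ZMod p) := A \ B with hC
  have hCcard : C.card = A.card - k := by
    rw [hC, Finset.card_sdiff_of_subset hBA, hBcard]
  have hCne : C.Nonempty := Finset.card_pos.mp (by omega)
  have hBne : B.Nonempty := Finset.card_pos.mp (by omega)
  have hnegB : (-B).card = B.card := Finset.card_neg B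
  have hCD : min p (A.card - 1) ≤ (C + (-B)).card := by
    have := ZMod.cauchy_davenport hp hCne hBne.neg
    rwa [hnegB, hCcard, hBcard, show A.card - k + k - 1 = A.card - 1 by omega] at this
  set σ : ZMod p := B.sum id with hσ
  have hsub : insert σ ((C + (-B)).image fun x => σ + x) ⊆ nSum k A := by
    intro x hx
    rw [Finset.mem_insert] at hx
    rcases hx with rfl | hx
    · exact Finset.mem_image.mpr ⟨B, Finset.mem_powersetCard.mpr ⟨hBA, hBcard⟩, rfl⟩
    · obtain ⟨y, hy, rfl⟩ := Finset.mem_image.mp hx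
      obtain ⟨c, hc, b', hb', rfl⟩ := Finset.mem_add.mp hy
      obtain ⟨b, hb, rfl⟩ := Finset.mem_neg.mp hb'
      have hcB : c ∉ B := (Finset.mem_sdiff.mp hc).2
      have hcA : c ∈ A := (Finset.mem_sdiff.mp hc).1
      have hce : c ∉ B.erase b := fun h => hcB (Finset.mem_of_mem_erase h)
      refine Finset.mem_image.mpr ⟨insert c (B.erase b), ?_, ?_⟩
      · refine Finset.mem_powersetCard.mpr ⟨?_, ?_⟩
        · intro x hx
          rcases Finset.mem_insert.mp hx with rfl | hx
          · exact hcA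
          · exact hBA (Finset.mem_of_mem_erase hx)
        · rw [Finset.card_insert_of_notMem hce, Finset.card_erase_of_mem hb, hBcard]
          omega
      · rw [Finset.sum_insert hce]
        have h1 : (∑ x ∈ B.erase b, id x) + id b = ∑ x ∈ B, id x :=
          Finset.sum_erase_add B id hb
        have h2 : ∑ x ∈ B.erase b, id x = σ - b := by
          rw [hσ, ← h1]; simp
        simp only [id] at h2 ⊢
        rw [h2]; ring
  have hσnot : σ ∉ (C + (-B)).image fun x => σ + x := by
    intro h
    obtain ⟨y, hy, hyy⟩ := Finset.mem_image.mp h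
    have hy0 : y = 0 := by
      have : σ + y = σ + 0 := by rw [add_zero]; exact hyy
      exact add_left_cancel this
    obtain ⟨c, hc, b', hb', hcb⟩ := Finset.mem_add.mp hy
    obtain ⟨b, hb, rfl⟩ := Finset.mem_neg.mp hb'
    have : c = b := by
      have : c + -b = 0 := hcb.trans hy0
      linear_combination this
    exact (Finset.mem_sdiff.mp hc).2 (this ▸ hb)
  have hcard : (C + -B).card + 1 ≤ (nSum k A).card := by
    have h := Finset.card_le_card hsub
    rwa [Finset.card_insert_of_notMem hσnot,
      Finset.card_image_of_injective _ (add_right_injective σ)] at h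
  have hmin : min p (A.card - 1) = A.card - 1 := min_eq_right (by omega)
  have hmin2 : min p A.card = A.card := min_eq_right hAp
  rw [hmin] at hCD
  constructor
  · omega
  · omega
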